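/- Let g : X → Y be a spectral map of spectral spaces and f : Y → X a function with g ∘ f = id_Y, such that: (i) f preserves specializations; and (ii) for every x ∈ X, x specializes to f(g(x)). Then g is a closed map (and hence a closed quotient map), f is a topological embedding, and g(Z) = f⁻¹(Z) for every specialization-closed subset Z ⊆ X. -/

import Mathlib

/-- A spectral space: quasi-compact, T0, sober, and the quasi-compact open subsets
form a basis closed under finite intersection. -/
def IsSpectralSpace (X : Type*) [TopologicalSpace X] : Prop :=
  CompactSpace X ∧ T0Space X ∧ QuasiSober X ∧
  TopologicalSpace.IsTopologicalBasis {U : Set X | IsOpen U ∧ IsCompact U} ∧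
  ∀ U V : Set X, IsOpen U → IsCompact U → IsOpen V → IsCompact V → IsCompact (U ∩ V)

/-- A spectral quotient map: a surjective spectral map such that any subset of the
target whose preimage is quasi-compact open is itself quasi-compact open. -/
def IsSpectralQuotientMap {X Y : Type*} [TopologicalSpace X] [TopologicalSpace Y]
    (φ : X → Y) : Prop :=
  Function.Surjective φ ∧ IsSpectralMap φ ∧
  ∀ C : Set Y, IsOpen (φ ⁻¹' C) → IsCompact (φ ⁻¹' C) → IsOpen C ∧ IsCompact C

open Set Filter TopologicalSpace Topology

/-- In a finite subchain of a chain of sets, there is a least element. -/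
private lemma chain_finset_least {α : Type*} {c : Set (Set α)} (hc : IsChain (· ⊆ ·) c)
    (u : Finset ↥c) (hu : u.Nonempty) : ∃ i ∈ u, ∀ j ∈ u, (i : Set α) ⊆ (j : Set α) := by
  classical
  induction u using Finset.induction with
  | empty => simp at hu
  | @insert a s ha ih =>
    rcases s.eq_empty_or_nonempty with rfl | hs
    · exact ⟨a, Finset.mem_insert_self _ _, by simp⟩
    · obtain ⟨i, hi, hleast⟩ := ih hs
      rcases eq_or_ne (i : Set α) (a : Set α) with heq | hne
      · refine ⟨i, Finset.mem_insert_of_mem hi, ?_⟩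
        intro j hj
        rcases Finset.mem_insert.1 hj with rfl | hj
        · exact heq.le
        · exact hleast j hj
      · rcases hc i.2 a.2 (fun h => hne (by rw [h])) with h1 | h1
        · refine ⟨i, Finset.mem_insert_of_mem hi, ?_⟩
          intro j hj
          rcases Finset.mem_insert.1 hj with rfl | hj
          · exact h1
          · exact hleast j hj
        · refine ⟨a, Finset.mem_insert_self _ _, ?_⟩
          intro j hj
          rcases Finset.mem_insert.1 hj with rfl | hj
          · exact subset_rfl
          · exact h1.trans (hleast j hj)

/-- The Hochster point of an ultrafilter on a spectral space: a point belonging to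
exactly the quasi-compact opens lying in the ultrafilter. -/
private lemma hochster_point {X : Type*} [TopologicalSpace X] (hX : IsSpectralSpace X)
    (F : Ultrafilter X) :
    ∃ z : X, ∀ U : Set X, IsOpen U → IsCompact U → (z ∈ U ↔ U ∈ F) := by
  obtain ⟨cpt, t0, sob, basis, hinter⟩ := hX
  haveI := cpt
  set Z0 : Set X := ⋂ V ∈ {V : Set X | IsOpen V ∧ IsCompact V ∧ V ∉ F}, Vᶜ with hZ0def
  set S : Set (Set X) :=
    {Z | IsClosed Z ∧ Z ⊆ Z0 ∧
      ∀ U : Set X, IsOpen U → IsCompact U → U ∈ F → (Z ∩ U).Nonempty} with hSdef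
  have hZ0closed : IsClosed Z0 :=
    isClosed_biInter fun V hV => hV.1.isClosed_compl
  have hZ0mem : Z0 ∈ S := by
    refine ⟨hZ0closed, subset_rfl, ?_⟩
    intro U hUo hUc hUF
    by_contra hne
    rw [Set.not_nonempty_iff_eq_empty] at hne
    have hcover : U ⊆ ⋃ V : {V : Set X // IsOpen V ∧ IsCompact V ∧ V ∉ F}, (V : Set X) := by
      intro x hxU
      by_contra hx
      have hxZ0 : x ∈ Z0 := by
        refine Set.mem_iInter₂.2 fun V hV => ?_
        intro hxV
        exact hx (Set.mem_iUnion.2 ⟨⟨V, hV⟩, hxV⟩)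
      exact absurd hne (Set.nonempty_iff_ne_empty.1 ⟨x, hxZ0, hxU⟩)
    obtain ⟨t, ht⟩ := hUc.elim_finite_subcover _ (fun V => V.2.1) hcover
    have hmem : (⋃ V ∈ (t : Set {V : Set X // IsOpen V ∧ IsCompact V ∧ V ∉ F}),
        (V : Set X)) ∈ F := by
      refine F.toFilter.mem_of_superset hUF ?_
      simpa using ht
    rw [Ultrafilter.finite_biUnion_mem_iff t.finite_toSet] at hmem
    obtain ⟨V, _, hVF⟩ := hmem
    exact V.2.2.2 hVF
  have hchainLB : ∀ c ⊆ S, IsChain (· ⊆ ·) c → c.Nonempty →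
      ∃ lb ∈ S, ∀ s ∈ c, lb ⊆ s := by
    intro c hcS hc hcne
    refine ⟨⋂₀ c, ⟨isClosed_sInter fun Z hZ => (hcS hZ).1, ?_, ?_⟩,
      fun Z hZ => Set.sInter_subset_of_mem hZ⟩
    · obtain ⟨Z, hZ⟩ := hcne
      exact (Set.sInter_subset_of_mem hZ).trans (hcS hZ).2.1
    · intro U hUo hUc hUF
      have key : (U ∩ ⋂ i : ↥c, (i : Set X)).Nonempty := by
        refine hUc.inter_iInter_nonempty _ (fun i => (hcS i.2).1) ?_
        intro u
        rcases u.eq_empty_or_nonempty with rfl | hu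
        · simpa using F.nonempty_of_mem hUF
        · obtain ⟨i, hi, hleast⟩ := chain_finset_least hc u hu
          obtain ⟨x, hx1, hx2⟩ := (hcS i.2).2.2 U hUo hUc hUF
          exact ⟨x, hx2, Set.mem_iInter₂.2 fun j hj => hleast j hj hx1⟩
      obtain ⟨x, hx1, hx2⟩ := key
      exact ⟨x, Set.sInter_eq_iInter ▸ hx2, hx1⟩
  obtain ⟨m, hmZ0, hmin⟩ := zorn_superset_nonempty S hchainLB Z0 hZ0mem
  obtain ⟨hmS : m ∈ S, hminle⟩ := hmin
  -- m is irreducible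
  have hmne : m.Nonempty := by
    obtain ⟨x, hx, -⟩ := hmS.2.2 univ isOpen_univ isCompact_univ univ_mem
    exact ⟨x, hx⟩
  have hkey : ∀ u : Set X, IsOpen u → (m ∩ u).Nonempty →
      ∃ U : Set X, IsOpen U ∧ IsCompact U ∧ U ∈ F ∧ m ∩ U ⊆ u := by
    intro u hu hmu
    by_contra hcon
    push_neg at hcon
    have hm' : m \ u ∈ S := by
      refine ⟨hmS.1.sdiff hu, (Set.diff_subset).trans hmS.2.1, ?_⟩
      intro U hUo hUc hUF
      by_contra hne
      rw [Set.not_nonempty_iff_eq_empty] at hne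
      refine hcon U hUo hUc hUF ?_
      intro x hx
      by_contra hxu
      exact absurd hne (Set.nonempty_iff_ne_empty.1 ⟨x, ⟨hx.1, hxu⟩, hx.2⟩)
    have := hminle hm' Set.diff_subset
    obtain ⟨x, hxm, hxu⟩ := hmu
    exact (this hxm).2 hxu
  have hirr : IsIrreducible m := by
    refine ⟨hmne, fun u v hu hv hmu hmv => ?_⟩
    obtain ⟨U, hUo, hUc, hUF, hU⟩ := hkey u hu hmu
    obtain ⟨V, hVo, hVc, hVF, hV⟩ := hkey v hv hmv
    obtain ⟨x, hxm, hxUV⟩ := hmS.2.2 (U ∩ V) (hUo.inter hVo)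
      (hinter U V hUo hUc hVo hVc) (inter_mem hUF hVF)
    exact ⟨x, hxm, hU ⟨hxm, hxUV.1⟩, hV ⟨hxm, hxUV.2⟩⟩
  obtain ⟨z, hz⟩ := sob.sober hirr hmS.1
  refine ⟨z, fun U hUo hUc => ⟨?_, ?_⟩⟩
  · intro hzU
    by_contra hUF
    have hZ0sub : Z0 ⊆ Uᶜ := by
      rw [hZ0def]
      exact Set.biInter_subset_of_mem (⟨hUo, hUc, hUF⟩ :
        U ∈ {V : Set X | IsOpen V ∧ IsCompact V ∧ V ∉ F})
    have hzm : z ∈ m := hz ▸ subset_closure rfl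
    exact hZ0sub (hmS.2.1 hzm) hzU
  · intro hUF
    obtain ⟨x, hxm, hxU⟩ := hmS.2.2 U hUo hUc hUF
    have hxcl : x ∈ closure ({z} : Set X) := hz.symm ▸ hxm
    obtain ⟨w, hwU, hwz⟩ := mem_closure_iff.1 hxcl U hUo hxU
    rwa [show w = z from hwz] at hwU

/-- Patch compactness consequence: a closed set intersecting all finite intersections of a
family of quasi-compact opens intersects the whole intersection. -/
private lemma spectral_patch_nonempty {X : Type*} [TopologicalSpace X] (hX : IsSpectralSpace X)
    {Z : Set X} (hZ : IsClosed Z) {ι : Type*} (U : ι → Set X)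
    (hUo : ∀ i, IsOpen (U i)) (hUc : ∀ i, IsCompact (U i))
    (h : ∀ t : Finset ι, (Z ∩ ⋂ i ∈ t, U i).Nonempty) :
    (Z ∩ ⋂ i, U i).Nonempty := by
  classical
  set s : Set (Set X) := insert Z (Set.range U) with hsdef
  have hfin : ∀ t : Set (Set X), t.Finite → t ⊆ s →
      ∃ v : Finset ι, Z ∩ ⋂ i ∈ v, U i ⊆ ⋂₀ t := by
    intro t htf
    refine Set.Finite.induction_on (motive := fun t _ => t ⊆ s → ∃ v : Finset ι, Z ∩ ⋂ i ∈ v, U i ⊆ ⋂₀ t) t htf (fun _ => ⟨∅, by simp⟩) ?_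
    intro a t ha htf2 ih hsub
    obtain ⟨v, hv⟩ := ih (fun x hx => hsub (Set.mem_insert_of_mem _ hx))
    have haS : a ∈ s := hsub (Set.mem_insert _ _)
    rw [Set.sInter_insert]
    rcases haS with rfl | ⟨i, rfl⟩
    · exact ⟨v, fun x hx => ⟨hx.1, hv hx⟩⟩
    · refine ⟨insert i v, fun x hx => ?_⟩
      have hx1 : x ∈ Z := hx.1
      have hx2 := Set.mem_iInter₂.1 hx.2
      refine ⟨hx2 i (Finset.mem_insert_self _ _), hv ⟨hx1, Set.mem_iInter₂.2 fun j hj =>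
        hx2 j (Finset.mem_insert_of_mem hj)⟩⟩
  haveI hne : (Filter.generate s).NeBot := by
    rw [Filter.generate_neBot_iff]
    intro t hts htf
    obtain ⟨v, hv⟩ := hfin t htf hts
    exact (h v).mono hv
  set G : Ultrafilter X := Ultrafilter.of (Filter.generate s) with hGdef
  have hG : (G : Filter X) ≤ Filter.generate s := Ultrafilter.of_le _
  have hZG : Z ∈ G := hG (Filter.mem_generate_of_mem (Set.mem_insert _ _))
  have hUG : ∀ i, U i ∈ G := fun i =>
    hG (Filter.mem_generate_of_mem (Set.mem_insert_of_mem _ (Set.mem_range_self i)))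
  obtain ⟨z, hz⟩ := hochster_point hX G
  have hzU : ∀ i, z ∈ U i := fun i => (hz _ (hUo i) (hUc i)).2 (hUG i)
  have hzZ : z ∈ Z := by
    by_contra hzZ
    obtain ⟨-, -, -, basis, -⟩ := hX
    obtain ⟨V, ⟨hVo, hVc⟩, hzV, hVsub⟩ :=
      basis.exists_subset_of_mem_open (show z ∈ Zᶜ from hzZ) hZ.isOpen_compl
    have hVG : V ∈ G := (hz V hVo hVc).1 hzV
    obtain ⟨x, hxZ, hxV⟩ := G.nonempty_of_mem (inter_mem hZG hVG)
    exact hVsub hxV hxZ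
  exact ⟨z, hzZ, Set.mem_iInter.2 hzU⟩

/-- The image of a closed set under a spectral map is closed provided it is
specialization closed. -/
private lemma image_closed_of_specClosed {X Y : Type*} [TopologicalSpace X] [TopologicalSpace Y]
    (hX : IsSpectralSpace X) (hY : IsSpectralSpace Y) {g : X → Y} (hg : IsSpectralMap g)
    {Z : Set X} (hZ : IsClosed Z)
    (hspec : ∀ y ∈ g '' Z, closure {y} ⊆ g '' Z) : IsClosed (g '' Z) := by
  classical
  set S : Set Y := g '' Z with hSdef
  rw [← isOpen_compl_iff]
  rw [isOpen_iff_forall_mem_open]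
  intro y hy
  -- choose quasi-compact opens around y missing each point of S
  have hsep : ∀ s : ↥S, ∃ V : Set Y, IsOpen V ∧ IsCompact V ∧ y ∈ V ∧ (s : Y) ∉ V := by
    intro s
    have hyns : y ∉ closure ({(s : Y)} : Set Y) := fun hc => hy (hspec _ s.2 hc)
    rw [mem_closure_iff] at hyns
    push_neg at hyns
    obtain ⟨o, ho, hyo, hos⟩ := hyns
    obtain ⟨-, -, -, basis, -⟩ := hY
    obtain ⟨V, ⟨hVo, hVc⟩, hyV, hVsub⟩ := basis.exists_subset_of_mem_open hyo ho
    refine ⟨V, hVo, hVc, hyV, fun hsV => ?_⟩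
    exact absurd hos (Set.nonempty_iff_ne_empty.1 ⟨(s : Y), hVsub hsV, rfl⟩)
  choose V hVo hVc hyV hsV using hsep
  have hempty : ¬ (Z ∩ ⋂ s : ↥S, g ⁻¹' (V s)).Nonempty := by
    rintro ⟨x, hxZ, hxI⟩
    have hgx : g x ∈ S := ⟨x, hxZ, rfl⟩
    exact hsV ⟨g x, hgx⟩ (Set.mem_iInter.1 hxI ⟨g x, hgx⟩)
  have hnot : ¬ ∀ t : Finset ↥S, (Z ∩ ⋂ s ∈ t, g ⁻¹' (V s)).Nonempty := by
    intro hall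
    exact hempty (spectral_patch_nonempty hX hZ _
      (fun s => (hVo s).preimage hg.continuous)
      (fun s => hg.isCompact_preimage_of_isOpen (hVo s) (hVc s)) hall)
  push_neg at hnot
  obtain ⟨t, ht⟩ := hnot
  refine ⟨⋂ s ∈ t, V s, ?_, ?_, ?_⟩
  · intro w hw
    rintro ⟨x, hxZ, rfl⟩
    have : x ∈ Z ∩ ⋂ s ∈ t, g ⁻¹' (V s) :=
      ⟨hxZ, Set.mem_iInter₂.2 fun s hs => Set.mem_iInter₂.1 hw s hs⟩
    rw [ht] at this
    exact this
  · exact isOpen_biInter_finset fun s _ => hVo s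
  · exact Set.mem_iInter₂.2 fun s _ => hyV s

/-- Given a spectral map `g` with a specialization-preserving section `f` such that
every point specializes to `f (g x)`, the map `g` is a closed (quotient) map, `f` is a
topological embedding, and `g(Z) = f⁻¹(Z)` for every specialization-closed `Z`. -/
theorem stmt_15 {X Y : Type*} [TopologicalSpace X] [TopologicalSpace Y]
    (hX : IsSpectralSpace X) (hY : IsSpectralSpace Y)
    (g : X → Y) (hg : IsSpectralMap g) (f : Y → X)
    (hgf : ∀ y : Y, g (f y) = y)
    (hfspec : ∀ y y' : Y, y' ∈ closure {y} → f y' ∈ closure {f y})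
    (hxspec : ∀ x : X, f (g x) ∈ closure {x}) :
    IsClosedMap g ∧ Topology.IsQuotientMap g ∧ Topology.IsEmbedding f ∧
      ∀ Z : Set X, (∀ x ∈ Z, closure {x} ⊆ Z) → g '' Z = f ⁻¹' Z := by
  -- the set-theoretic identity
  have key1 : ∀ Z : Set X, (∀ x ∈ Z, closure {x} ⊆ Z) → g '' Z = f ⁻¹' Z := by
    intro Z hZ
    apply Set.Subset.antisymm
    · rintro y ⟨x, hxZ, rfl⟩
      exact hZ x hxZ (hxspec x)
    · intro y hyZ
      exact ⟨f y, hyZ, hgf y⟩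
  -- images of closed sets are specialization closed
  have key2 : ∀ Z : Set X, IsClosed Z → ∀ y ∈ g '' Z, closure {y} ⊆ g '' Z := by
    rintro Z hZ y ⟨x, hxZ, rfl⟩ y' hy'
    have hclx : closure ({x} : Set X) ⊆ Z :=
      closure_minimal (Set.singleton_subset_iff.2 hxZ) hZ
    have h1 : f (g x) ∈ Z := hclx (hxspec x)
    have h2 : f y' ∈ closure {f (g x)} := hfspec (g x) y' hy'
    have h3 : f y' ∈ Z := closure_minimal (Set.singleton_subset_iff.2 h1) hZ h2
    exact ⟨f y', h3, hgf y'⟩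
  have hclosed : IsClosedMap g := fun Z hZ =>
    image_closed_of_specClosed hX hY hg hZ (key2 Z hZ)
  have hsurj : Function.Surjective g := fun y => ⟨f y, hgf y⟩
  have hfcont : Continuous f := by
    rw [continuous_iff_isClosed]
    intro Z hZ
    have hspecZ : ∀ x ∈ Z, closure ({x} : Set X) ⊆ Z := fun x hx =>
      closure_minimal (Set.singleton_subset_iff.2 hx) hZ
    rw [← key1 Z hspecZ]
    exact hclosed Z hZ
  have hginj : Function.Injective f := fun a b hab => by
    rw [← hgf a, ← hgf b, hab]
  have hind : Topology.IsInducing f := by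
    refine Topology.IsInducing.of_comp hfcont hg.continuous ?_
    have : g ∘ f = id := funext hgf
    rw [this]
    exact Topology.IsInducing.id
  exact ⟨hclosed, hclosed.isQuotientMap hg.continuous hsurj, ⟨hind, hginj⟩, key1⟩
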